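/- Let Γ = {a^(1), e^(0)} be both the input and output alphabet. Let M' be the monadic macro tree transducer with states q0 (rank 1, initial) and q (rank 2) and rules q0(a(x1)) → q(x1, q0(x1)), q0(e) → e, q(a(x1), y1) → q(x1, y1), q(e, y1) → a(a(y1)), and let N' be the monadic macro tree transducer with states p0 (rank 1, initial) and p (rank 2) and rules p0(a(x1)) → p(x1, p(x1, p0(x1))), p0(e) → e, p(a(x1), y1) → p(x1, y1), p(e, y1) → a(y1). Then M' and N' are equivalent (both map aⁿ(e) to a^{2n}(e)), but for every n the height-balance of M'(aⁿ(x)) and N'(aⁿ(x)) equals n; hence equivalent monadic macro tree transducers need not have bounded height-balance. -/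

import Mathlib

/-! ## Finite ordered ranked trees -/

/-- Finite ordered labeled trees. -/
inductive RTree (α : Type) : Type
  | node : α → List (RTree α) → RTree α

namespace RTree

variable {α β : Type}

/-- The label of the root node. -/
def label : RTree α → α
  | node a _ => a

mutual
  /-- The size (number of nodes) of a tree. -/
  def size : RTree α → ℕ
    | node _ ts => 1 + sizeList ts
  def sizeList : List (RTree α) → ℕ
    | [] => 0
    | t :: ts => size t + sizeList ts
end

mutual
  /-- The height of a tree (a leaf has height 1). -/
  def height : RTree α → ℕ
    | node _ ts => 1 + heightList ts
  def heightList : List (RTree α) → ℕ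
    | [] => 0
    | t :: ts => max (height t) (heightList ts)
end

mutual
  /-- Relabeling of a tree. -/
  def map (f : α → β) : RTree α → RTree β
    | node a ts => node (f a) (mapList f ts)
  def mapList (f : α → β) : List (RTree α) → List (RTree β)
    | [] => []
    | t :: ts => map f t :: mapList f ts
end

/-- `WF rk t` means `t` is a tree over the ranked alphabet with rank function `rk`:
every node labeled `a` has exactly `rk a` children.  Thus `T_Σ = {t | WF rk t}`. -/
inductive WF (rk : α → ℕ) : RTree α → Prop
  | node {a : α} {ts : List (RTree α)} :
      ts.length = rk a → (∀ t ∈ ts, WF rk t) → WF rk (node a ts)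

/-- `SubtreeAt t u r`: `u` is (the Dewey path of) a node of `t` and `r` is the
subtree of `t` rooted at `u`. -/
inductive SubtreeAt : RTree α → List ℕ → RTree α → Prop
  | here (t : RTree α) : SubtreeAt t [] t
  | child {a : α} {ts : List (RTree α)} {i : ℕ} {u : List ℕ} {ti r : RTree α} :
      ts[i]? = some ti → SubtreeAt ti u r → SubtreeAt (node a ts) (i :: u) r

/-- `ReplaceAt t u r t'`: `u` is a node of `t`, and `t'` is the tree `t[u ← r]`
obtained from `t` by replacing the subtree rooted at `u` by `r`. -/
inductive ReplaceAt : RTree α → List ℕ → RTree α → RTree α → Prop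
  | here (t r : RTree α) : ReplaceAt t [] r r
  | child {a : α} {ts : List (RTree α)} {i : ℕ} {u : List ℕ} {r ti ti' : RTree α} :
      ts[i]? = some ti → ReplaceAt ti u r ti' →
      ReplaceAt (node a ts) (i :: u) r (node a (ts.set i ti'))

end RTree

/-- A (complete) deterministic finite-state bottom-up tree automaton over the
alphabet `S`, with state set `P` and final states `final`. -/
structure BUA (S P : Type) where
  delta : S → List P → P
  final : Set P

variable {S P : Type}

mutual
  /-- The state reached by a bottom-up automaton on a tree. -/
  def buaRun (A : BUA S P) : RTree S → P
    | .node a ts => A.delta a (buaRunList A ts)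
  def buaRunList (A : BUA S P) : List (RTree S) → List P
    | [] => []
    | t :: ts => buaRun A t :: buaRunList A ts
end

/-- A tree language over the ranked alphabet `(S, rk)` is regular if it is recognized
by a deterministic finite-state bottom-up tree automaton. -/
def RegularTreeLang (rk : S → ℕ) (L : Set (RTree S)) : Prop :=
  ∃ (P : Type) (_ : Fintype P) (A : BUA S P),
    L = {t | RTree.WF rk t ∧ buaRun A t ∈ A.final}
/-! ## Deterministic macro tree transducers

A state of rank `m+1` is encoded by `prm q = m` (its number of context parameters).
Right-hand sides of rules are trees over `Δ ∪ Q ∪ X ∪ Y`, where every `Q`-labeled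
node has an input variable `x_i` as its (implicit) first child; this is encoded by
the constructor `MRhs.call q i ps`.  A top-down tree transducer is exactly a macro
tree transducer all of whose states have rank one (`prm q = 0`).

To be able to talk about partial inputs `s[u ← x]`, input trees are trees over
`Option S`, where `none` plays the role of the fresh rank-0 symbol `x`; an
ordinary input tree `s` is represented as `RTree.map some s`.  Outputs (sentential
forms) are trees over the alphabet `PL Q D`: output symbols `PL.out d`, unresolved
state calls `PL.st q` (i.e. `q(x, t₁, …, t_m)`, whose children are the current
parameter trees), and formal context parameters `PL.pr j` (i.e. `y_{j+1}`). -/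

/-- Labels of sentential forms produced by a macro tree transducer. -/
inductive PL (Q D : Type) : Type
  | out : D → PL Q D
  | st : Q → PL Q D
  | pr : ℕ → PL Q D

/-- Right-hand sides of rules of a macro tree transducer with states `Q` and output
alphabet `D`: `out d ts` is an output symbol with subtrees, `param j` is the context
parameter `y_{j+1}`, and `call q i ps` is a state call `q(x_{i+1}, ps)`. -/
inductive MRhs (Q D : Type) : Type
  | out : D → List (MRhs Q D) → MRhs Q D
  | param : ℕ → MRhs Q D
  | call : Q → ℕ → List (MRhs Q D) → MRhs Q D

/-- Well-formedness of a right-hand side for a rule of a state with `m` parameters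
and an input symbol of rank `k`: output symbols have the right number of children,
parameters are among `y_1, …, y_m`, input variables are among `x_1, …, x_k`, and a
call of state `q'` passes exactly `prm q'` parameter trees. -/
inductive RhsWF {Q D : Type} (rkD : D → ℕ) (prm : Q → ℕ) (k m : ℕ) : MRhs Q D → Prop
  | out {d ts} : ts.length = rkD d → (∀ t ∈ ts, RhsWF rkD prm k m t) →
      RhsWF rkD prm k m (.out d ts)
  | param {j} : j < m → RhsWF rkD prm k m (.param j)
  | call {q i ps} : i < k → ps.length = prm q → (∀ t ∈ ps, RhsWF rkD prm k m t) →
      RhsWF rkD prm k m (.call q i ps)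

/-- A deterministic macro tree transducer with states `Q`, input alphabet `(S, rkS)`
and output alphabet `(D, rkD)`.  `prm q` is the number of context parameters of
state `q` (so `q` has rank `prm q + 1`); `rules q σ` is the right-hand side of the
`(q,σ)`-rule, if present (determinism: at most one rule per pair). -/
structure MTT (Q S D : Type) where
  rkS : S → ℕ
  rkD : D → ℕ
  prm : Q → ℕ
  init : Q
  rules : Q → S → Option (MRhs Q D)

namespace MTT

variable {Q S D : Type}

/-- `M` is a well-formed macro tree transducer: the initial state has rank one and
all right-hand sides are well-formed. -/
def Proper (M : MTT Q S D) : Prop :=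
  M.prm M.init = 0 ∧
    ∀ q σ r, M.rules q σ = some r → RhsWF M.rkD M.prm (M.rkS σ) (M.prm q) r

/-- `M` is total: there is exactly one rule for every state and input symbol. -/
def Total (M : MTT Q S D) : Prop := ∀ q σ, (M.rules q σ).isSome

end MTT

/-- A top-down tree transducer is a macro tree transducer each of whose states has
rank one, i.e. no context parameters. -/
def IsTopDown {Q S D : Type} (M : MTT Q S D) : Prop := ∀ q, M.prm q = 0

/-- A macro tree transducer is monadic if its input and output ranked alphabets
only contain symbols of rank 1 and rank 0. -/
def MTT.Monadic {Q S D : Type} (M : MTT Q S D) : Prop :=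
  (∀ σ, M.rkS σ ≤ 1) ∧ (∀ d, M.rkD d ≤ 1)

variable {Q S D : Type}

mutual
  /-- Second-order substitution of the parameter leaves `y_{j+1}` of a sentential
  form by the trees `vs`. -/
  def psubst (vs : List (RTree (PL Q D))) : RTree (PL Q D) → RTree (PL Q D)
    | .node (.pr j) _ => vs.getD j (.node (.pr j) [])
    | .node (.out d) ts => .node (.out d) (psubstList vs ts)
    | .node (.st q) ts => .node (.st q) (psubstList vs ts)
  def psubstList (vs : List (RTree (PL Q D))) :
      List (RTree (PL Q D)) → List (RTree (PL Q D))
    | [] => []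
    | t :: ts => psubst vs t :: psubstList vs ts
end

/-- The fresh rank-0 input symbol `x` used in partial inputs `s[u ← x]`. -/
def xLeaf {S : Type} : RTree (Option S) := .node none []

mutual
  /-- Big-step semantics of a macro tree transducer: `MEval M q s t` means that the
  computation of `M` started in state `q` on the input tree `s` (a tree over
  `Option S`, where `none` is the fresh symbol `x` of partial inputs) produces the
  (sentential form) tree `t`.  On the symbol `x` the computation blocks, yielding
  the unresolved call `q(x, y_1, …, y_m)`.  For `s ∈ T_Σ` (no occurrence of `x`)
  and well-formed transducers, `t` contains no `PL.st` labels, and `M_q(s)` is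
  defined iff such a `t` exists; determinism makes `t` unique. -/
  inductive MEval (M : MTT Q S D) : Q → RTree (Option S) → RTree (PL Q D) → Prop
    | atX (q : Q) :
        MEval M q (.node none [])
          (.node (.st q) ((List.range (M.prm q)).map fun j => .node (.pr j) []))
    | step {q : Q} {σ : S} {ss : List (RTree (Option S))} {r : MRhs Q D}
        {t : RTree (PL Q D)} :
        M.rules q σ = some r → MExpand M ss r t → MEval M q (.node (some σ) ss) t

  /-- Evaluation of a right-hand side with current input subtrees `ss`. -/
  inductive MExpand (M : MTT Q S D) :
      List (RTree (Option S)) → MRhs Q D → RTree (PL Q D) → Prop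
    | out {ss d ts us} : MExpandList M ss ts us →
        MExpand M ss (.out d ts) (.node (.out d) us)
    | param {ss j} : MExpand M ss (.param j) (.node (.pr j) [])
    | call {ss : List (RTree (Option S))} {q : Q} {i : ℕ} {ps : List (MRhs Q D)}
        {si : RTree (Option S)} {vs : List (RTree (PL Q D))} {u : RTree (PL Q D)} :
        ss[i]? = some si → MExpandList M ss ps vs → MEval M q si u →
        MExpand M ss (.call q i ps) (psubst vs u)

  inductive MExpandList (M : MTT Q S D) :
      List (RTree (Option S)) → List (MRhs Q D) → List (RTree (PL Q D)) → Prop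
    | nil {ss} : MExpandList M ss [] []
    | cons {ss t ts u us} : MExpand M ss t u → MExpandList M ss ts us →
        MExpandList M ss (t :: ts) (u :: us)
end

/-- The translation `τ_M ⊆ T_Σ × T_Δ` realized by a macro tree transducer `M`
(the graph of the partial function `τ_M : T_Σ ⇀ T_Δ`). -/
def MTT.tau (M : MTT Q S D) : Set (RTree S × RTree D) :=
  {p | RTree.WF M.rkS p.1 ∧ MEval M M.init (RTree.map some p.1) (RTree.map PL.out p.2)}

/-! ## Statement 4

The monadic macro tree transducers `M'` and `N'` of Figure 3, over the monadic
alphabet `Γ = {a⁽¹⁾, e⁽⁰⁾}` (encoded as `Bool` with `a = true`, `e = false`) used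
both as input and output alphabet.  States are encoded as `Bool`:
`q0 = p0 = false` (initial, rank 1) and `q = p = true` (rank 2). -/

/-- Rank function of `Γ = {a⁽¹⁾, e⁽⁰⁾}`. -/
def rkGam : Bool → ℕ := fun b => cond b 1 0

/-- `M'`: `q0(a(x1)) → q(x1, q0(x1))`, `q0(e) → e`, `q(a(x1),y1) → q(x1,y1)`,
`q(e,y1) → a(a(y1))`. -/
def Mex' : MTT Bool Bool Bool where
  rkS := rkGam
  rkD := rkGam
  prm := fun q => cond q 1 0
  init := false
  rules := fun q σ =>
    match q, σ with
    | false, true => some (.call true 0 [.call false 0 []])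
    | false, false => some (.out false [])
    | true, true => some (.call true 0 [.param 0])
    | true, false => some (.out true [.out true [.param 0]])

/-- `N'`: `p0(a(x1)) → p(x1, p(x1, p0(x1)))`, `p0(e) → e`, `p(a(x1),y1) → p(x1,y1)`,
`p(e,y1) → a(y1)`. -/
def Nex' : MTT Bool Bool Bool where
  rkS := rkGam
  rkD := rkGam
  prm := fun q => cond q 1 0
  init := false
  rules := fun q σ =>
    match q, σ with
    | false, true => some (.call true 0 [.call true 0 [.call false 0 []]])
    | false, false => some (.out false [])
    | true, true => some (.call true 0 [.param 0])
    | true, false => some (.out true [.param 0])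

/-- The monadic input/output tree `aⁿ(e)`. -/
def aPow : ℕ → RTree Bool
  | 0 => .node false []
  | n + 1 => .node true [aPow n]

/-- The partial monadic input tree `aⁿ(x)`. -/
def aPowX : ℕ → RTree (Option Bool)
  | 0 => .node none []
  | n + 1 => .node (some true) [aPowX n]


section Aux
open RTree

/-- Canonical output of `M'` on `aⁿ(x)`. -/
def MoutX : ℕ → RTree (PL Bool Bool)
  | 0 => .node (.st false) []
  | n+1 => .node (.st true) [MoutX n]

/-- Canonical output of `N'` on `aⁿ(x)`. -/
def NoutX : ℕ → RTree (PL Bool Bool)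
  | 0 => .node (.st false) []
  | n+1 => .node (.st true) [.node (.st true) [NoutX n]]

lemma height_MoutX (n : ℕ) : (MoutX n).height = n + 1 := by
  induction n with
  | zero => simp [MoutX, RTree.height, RTree.heightList]
  | succ n ih => simp [MoutX, RTree.height, RTree.heightList, ih]; omega

lemma height_NoutX (n : ℕ) : (NoutX n).height = 2*n + 1 := by
  induction n with
  | zero => simp [NoutX, RTree.height, RTree.heightList]
  | succ n ih => simp [NoutX, RTree.height, RTree.heightList, ih]; omega

@[simp] lemma psubst_pr0 (v : RTree (PL Bool Bool)) :
    psubst [v] (.node (.pr 0) []) = v := by simp [psubst]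

@[simp] lemma psubst_st (vs : List (RTree (PL Bool Bool))) (q : Bool)
    (t : RTree (PL Bool Bool)) :
    psubst vs (.node (.st q) [t]) = .node (.st q) [psubst vs t] := by
  simp [psubst, psubstList]

@[simp] lemma psubst_st0 (vs : List (RTree (PL Bool Bool))) (q : Bool) :
    psubst vs (.node (.st q) []) = .node (.st q) [] := by simp [psubst, psubstList]

@[simp] lemma psubst_out1 (vs : List (RTree (PL Bool Bool))) (d : Bool)
    (t : RTree (PL Bool Bool)) :
    psubst vs (.node (.out d) [t]) = .node (.out d) [psubst vs t] := by
  simp [psubst, psubstList]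

@[simp] lemma psubst_out0 (vs : List (RTree (PL Bool Bool))) (d : Bool) :
    psubst vs (.node (.out d) []) = .node (.out d) [] := by simp [psubst, psubstList]

lemma psubst_MoutX (vs : List (RTree (PL Bool Bool))) (n : ℕ) :
    psubst vs (MoutX n) = MoutX n := by
  induction n with
  | zero => simp [MoutX]
  | succ n ih => simp [MoutX, ih]

lemma psubst_NoutX (vs : List (RTree (PL Bool Bool))) (n : ℕ) :
    psubst vs (NoutX n) = NoutX n := by
  induction n with
  | zero => simp [NoutX]
  | succ n ih => simp [NoutX, ih]

@[simp] lemma mapOut_aPow_zero : (aPow 0).map (PL.out (Q := Bool)) = .node (.out false) [] := by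
  simp [aPow, RTree.map, RTree.mapList]

@[simp] lemma mapOut_aPow_succ (m : ℕ) :
    (aPow (m+1)).map (PL.out (Q := Bool)) = .node (.out true) [(aPow m).map PL.out] := by
  simp [aPow, RTree.map, RTree.mapList]

@[simp] lemma mapSome_aPow_zero : (aPow 0).map some = RTree.node (some false) [] := by
  simp [aPow, RTree.map, RTree.mapList]

@[simp] lemma mapSome_aPow_succ (m : ℕ) :
    (aPow (m+1)).map some = RTree.node (some true) [(aPow m).map some] := by
  simp [aPow, RTree.map, RTree.mapList]

lemma psubst_mapOut_aPow (vs : List (RTree (PL Bool Bool))) (m : ℕ) :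
    psubst vs ((aPow m).map PL.out) = (aPow m).map PL.out := by
  induction m with
  | zero => simp
  | succ m ih => simp [ih]

/-! ### Evaluation of `M'` -/

lemma MqX_uniq (n : ℕ) : ∀ ξ, MEval Mex' true (aPowX n) ξ →
    ξ = .node (.st true) [.node (.pr 0) []] := by
  induction n with
  | zero =>
    intro ξ h
    cases h with
    | atX => simp [Mex', List.range_succ]
  | succ n ih =>
    intro ξ h
    rw [show aPowX (n+1) = .node (some true) [aPowX n] from rfl] at h
    cases h with
    | step hr hex =>
      injection hr with hr; subst hr
      cases hex with
      | call hget hlist heval =>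
        simp only [List.getElem?_cons_zero, Option.some.injEq] at hget
        subst hget
        cases hlist with
        | cons h1 h2 =>
          cases h1
          cases h2
          rw [ih _ heval]
          simp

lemma MqX_ex (n : ℕ) : MEval Mex' true (aPowX n) (.node (.st true) [.node (.pr 0) []]) := by
  induction n with
  | zero =>
    have h := MEval.atX (M := Mex') true
    simpa [Mex', List.range_succ, aPowX] using h
  | succ n ih =>
    apply MEval.step (r := .call true 0 [.param 0]) rfl
    rw [show (RTree.node (.st true) [.node (.pr 0) []] : RTree (PL Bool Bool)) =
      psubst [.node (.pr 0) []] (.node (.st true) [.node (.pr 0) []]) by simp]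
    exact MExpand.call rfl (MExpandList.cons MExpand.param MExpandList.nil) ih

lemma Mq0X_uniq (n : ℕ) : ∀ ξ, MEval Mex' false (aPowX n) ξ → ξ = MoutX n := by
  induction n with
  | zero =>
    intro ξ h
    cases h with
    | atX => simp [Mex', MoutX]
  | succ n ih =>
    intro ξ h
    rw [show aPowX (n+1) = .node (some true) [aPowX n] from rfl] at h
    cases h with
    | step hr hex =>
      injection hr with hr; subst hr
      cases hex with
      | call hget hlist heval =>
        simp only [List.getElem?_cons_zero, Option.some.injEq] at hget
        subst hget
        cases hlist with
        | cons h1 h2 =>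
          cases h2
          cases h1 with
          | call hget' hlist' heval' =>
            simp only [List.getElem?_cons_zero, Option.some.injEq] at hget'
            subst hget'
            cases hlist'
            rw [ih _ heval', MqX_uniq _ _ heval]
            simp [MoutX, psubst_MoutX]

lemma Mq0X_ex (n : ℕ) : MEval Mex' false (aPowX n) (MoutX n) := by
  induction n with
  | zero => exact MEval.atX (M := Mex') false
  | succ n ih =>
    apply MEval.step (r := .call true 0 [.call false 0 []]) rfl
    rw [show MoutX (n+1) =
      psubst [psubst [] (MoutX n)] (.node (.st true) [.node (.pr 0) []]) by
        simp [MoutX, psubst_MoutX]]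
    exact MExpand.call rfl
      (MExpandList.cons (MExpand.call rfl MExpandList.nil ih) MExpandList.nil)
      (MqX_ex n)

lemma Mq_e_uniq (n : ℕ) : ∀ ξ, MEval Mex' true ((aPow n).map some) ξ →
    ξ = .node (.out true) [.node (.out true) [.node (.pr 0) []]] := by
  induction n with
  | zero =>
    intro ξ h
    rw [mapSome_aPow_zero] at h
    cases h with
    | step hr hex =>
      injection hr with hr; subst hr
      cases hex with
      | out hl =>
        cases hl with
        | cons h1 h2 =>
          cases h2
          cases h1 with
          | out hl' =>
            cases hl' with
            | cons h1' h2' =>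
              cases h2'
              cases h1'
              rfl
  | succ n ih =>
    intro ξ h
    rw [mapSome_aPow_succ] at h
    cases h with
    | step hr hex =>
      injection hr with hr; subst hr
      cases hex with
      | call hget hlist heval =>
        simp only [List.getElem?_cons_zero, Option.some.injEq] at hget
        subst hget
        cases hlist with
        | cons h1 h2 =>
          cases h1
          cases h2
          rw [ih _ heval]
          simp

lemma Mq_e_ex (n : ℕ) : MEval Mex' true ((aPow n).map some)
    (.node (.out true) [.node (.out true) [.node (.pr 0) []]]) := by
  induction n with
  | zero =>
    rw [mapSome_aPow_zero]
    apply MEval.step (r := .out true [.out true [.param 0]]) rfl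
    exact MExpand.out (MExpandList.cons
      (MExpand.out (MExpandList.cons MExpand.param MExpandList.nil)) MExpandList.nil)
  | succ n ih =>
    rw [mapSome_aPow_succ]
    apply MEval.step (r := .call true 0 [.param 0]) rfl
    rw [show (RTree.node (.out true) [.node (.out true) [.node (.pr 0) []]] :
        RTree (PL Bool Bool)) =
      psubst [.node (.pr 0) []]
        (.node (.out true) [.node (.out true) [.node (.pr 0) []]]) by simp]
    exact MExpand.call rfl (MExpandList.cons MExpand.param MExpandList.nil) ih

lemma Mq0_e_uniq (n : ℕ) : ∀ ξ, MEval Mex' false ((aPow n).map some) ξ →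
    ξ = (aPow (2*n)).map PL.out := by
  induction n with
  | zero =>
    intro ξ h
    rw [mapSome_aPow_zero] at h
    cases h with
    | step hr hex =>
      injection hr with hr; subst hr
      cases hex with
      | out hl => cases hl; simp
  | succ n ih =>
    intro ξ h
    rw [mapSome_aPow_succ] at h
    cases h with
    | step hr hex =>
      injection hr with hr; subst hr
      cases hex with
      | call hget hlist heval =>
        simp only [List.getElem?_cons_zero, Option.some.injEq] at hget
        subst hget
        cases hlist with
        | cons h1 h2 =>
          cases h2
          cases h1 with
          | call hget' hlist' heval' =>
            simp only [List.getElem?_cons_zero, Option.some.injEq] at hget'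
            subst hget'
            cases hlist'
            rw [ih _ heval', Mq_e_uniq _ _ heval,
              show 2*(n+1) = (2*n)+1+1 by ring]
            simp [psubst_mapOut_aPow]

lemma Mq0_e_ex (n : ℕ) : MEval Mex' false ((aPow n).map some) ((aPow (2*n)).map PL.out) := by
  induction n with
  | zero =>
    rw [mapSome_aPow_zero, show 2*0 = 0 from rfl, mapOut_aPow_zero]
    exact MEval.step (r := .out false []) rfl (MExpand.out MExpandList.nil)
  | succ n ih =>
    rw [mapSome_aPow_succ]
    apply MEval.step (r := .call true 0 [.call false 0 []]) rfl
    rw [show (aPow (2*(n+1))).map (PL.out (Q := Bool)) =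
      psubst [psubst [] ((aPow (2*n)).map PL.out)]
        (.node (.out true) [.node (.out true) [.node (.pr 0) []]]) by
        rw [show 2*(n+1) = (2*n)+1+1 by ring]
        simp [psubst_mapOut_aPow]]
    exact MExpand.call rfl
      (MExpandList.cons (MExpand.call rfl MExpandList.nil ih) MExpandList.nil)
      (Mq_e_ex n)

/-! ### Evaluation of `N'` -/

lemma NqX_uniq (n : ℕ) : ∀ ξ, MEval Nex' true (aPowX n) ξ →
    ξ = .node (.st true) [.node (.pr 0) []] := by
  induction n with
  | zero =>
    intro ξ h
    cases h with
    | atX => simp [Nex', List.range_succ]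
  | succ n ih =>
    intro ξ h
    rw [show aPowX (n+1) = .node (some true) [aPowX n] from rfl] at h
    cases h with
    | step hr hex =>
      injection hr with hr; subst hr
      cases hex with
      | call hget hlist heval =>
        simp only [List.getElem?_cons_zero, Option.some.injEq] at hget
        subst hget
        cases hlist with
        | cons h1 h2 =>
          cases h1
          cases h2
          rw [ih _ heval]
          simp

lemma NqX_ex (n : ℕ) : MEval Nex' true (aPowX n) (.node (.st true) [.node (.pr 0) []]) := by
  induction n with
  | zero =>
    have h := MEval.atX (M := Nex') true
    simpa [Nex', List.range_succ, aPowX] using h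
  | succ n ih =>
    apply MEval.step (r := .call true 0 [.param 0]) rfl
    rw [show (RTree.node (.st true) [.node (.pr 0) []] : RTree (PL Bool Bool)) =
      psubst [.node (.pr 0) []] (.node (.st true) [.node (.pr 0) []]) by simp]
    exact MExpand.call rfl (MExpandList.cons MExpand.param MExpandList.nil) ih

lemma Nq0X_uniq (n : ℕ) : ∀ ξ, MEval Nex' false (aPowX n) ξ → ξ = NoutX n := by
  induction n with
  | zero =>
    intro ξ h
    cases h with
    | atX => simp [Nex', NoutX]
  | succ n ih =>
    intro ξ h
    rw [show aPowX (n+1) = .node (some true) [aPowX n] from rfl] at h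
    cases h with
    | step hr hex =>
      injection hr with hr; subst hr
      cases hex with
      | call hget hlist heval =>
        simp only [List.getElem?_cons_zero, Option.some.injEq] at hget
        subst hget
        cases hlist with
        | cons h1 h2 =>
          cases h2
          cases h1 with
          | call hget' hlist' heval' =>
            simp only [List.getElem?_cons_zero, Option.some.injEq] at hget'
            subst hget'
            cases hlist' with
            | cons h1' h2' =>
              cases h2'
              cases h1' with
              | call hget'' hlist'' heval'' =>
                simp only [List.getElem?_cons_zero, Option.some.injEq] at hget''
                subst hget''
                cases hlist''
                rw [ih _ heval'', NqX_uniq _ _ heval', NqX_uniq _ _ heval]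
                simp [NoutX, psubst_NoutX]

lemma Nq0X_ex (n : ℕ) : MEval Nex' false (aPowX n) (NoutX n) := by
  induction n with
  | zero => exact MEval.atX (M := Nex') false
  | succ n ih =>
    apply MEval.step (r := .call true 0 [.call true 0 [.call false 0 []]]) rfl
    rw [show NoutX (n+1) =
      psubst [psubst [psubst [] (NoutX n)] (.node (.st true) [.node (.pr 0) []])]
        (.node (.st true) [.node (.pr 0) []]) by
        simp [NoutX, psubst_NoutX]]
    exact MExpand.call rfl
      (MExpandList.cons
        (MExpand.call rfl
          (MExpandList.cons (MExpand.call rfl MExpandList.nil ih) MExpandList.nil)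
          (NqX_ex n))
        MExpandList.nil)
      (NqX_ex n)

lemma Nq_e_uniq (n : ℕ) : ∀ ξ, MEval Nex' true ((aPow n).map some) ξ →
    ξ = .node (.out true) [.node (.pr 0) []] := by
  induction n with
  | zero =>
    intro ξ h
    rw [mapSome_aPow_zero] at h
    cases h with
    | step hr hex =>
      injection hr with hr; subst hr
      cases hex with
      | out hl =>
        cases hl with
        | cons h1 h2 =>
          cases h2
          cases h1
          rfl
  | succ n ih =>
    intro ξ h
    rw [mapSome_aPow_succ] at h
    cases h with
    | step hr hex =>
      injection hr with hr; subst hr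
      cases hex with
      | call hget hlist heval =>
        simp only [List.getElem?_cons_zero, Option.some.injEq] at hget
        subst hget
        cases hlist with
        | cons h1 h2 =>
          cases h1
          cases h2
          rw [ih _ heval]
          simp

lemma Nq_e_ex (n : ℕ) : MEval Nex' true ((aPow n).map some)
    (.node (.out true) [.node (.pr 0) []]) := by
  induction n with
  | zero =>
    rw [mapSome_aPow_zero]
    apply MEval.step (r := .out true [.param 0]) rfl
    exact MExpand.out (MExpandList.cons MExpand.param MExpandList.nil)
  | succ n ih =>
    rw [mapSome_aPow_succ]
    apply MEval.step (r := .call true 0 [.param 0]) rfl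
    rw [show (RTree.node (.out true) [.node (.pr 0) []] : RTree (PL Bool Bool)) =
      psubst [.node (.pr 0) []] (.node (.out true) [.node (.pr 0) []]) by simp]
    exact MExpand.call rfl (MExpandList.cons MExpand.param MExpandList.nil) ih

lemma Nq0_e_uniq (n : ℕ) : ∀ ξ, MEval Nex' false ((aPow n).map some) ξ →
    ξ = (aPow (2*n)).map PL.out := by
  induction n with
  | zero =>
    intro ξ h
    rw [mapSome_aPow_zero] at h
    cases h with
    | step hr hex =>
      injection hr with hr; subst hr
      cases hex with
      | out hl => cases hl; simp
  | succ n ih =>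
    intro ξ h
    rw [mapSome_aPow_succ] at h
    cases h with
    | step hr hex =>
      injection hr with hr; subst hr
      cases hex with
      | call hget hlist heval =>
        simp only [List.getElem?_cons_zero, Option.some.injEq] at hget
        subst hget
        cases hlist with
        | cons h1 h2 =>
          cases h2
          cases h1 with
          | call hget' hlist' heval' =>
            simp only [List.getElem?_cons_zero, Option.some.injEq] at hget'
            subst hget'
            cases hlist' with
            | cons h1' h2' =>
              cases h2'
              cases h1' with
              | call hget'' hlist'' heval'' =>
                simp only [List.getElem?_cons_zero, Option.some.injEq] at hget''
                subst hget''
                cases hlist''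
                rw [ih _ heval'', Nq_e_uniq _ _ heval', Nq_e_uniq _ _ heval,
                  show 2*(n+1) = (2*n)+1+1 by ring]
                simp [psubst_mapOut_aPow]

lemma Nq0_e_ex (n : ℕ) : MEval Nex' false ((aPow n).map some) ((aPow (2*n)).map PL.out) := by
  induction n with
  | zero =>
    rw [mapSome_aPow_zero, show 2*0 = 0 from rfl, mapOut_aPow_zero]
    exact MEval.step (r := .out false []) rfl (MExpand.out MExpandList.nil)
  | succ n ih =>
    rw [mapSome_aPow_succ]
    apply MEval.step (r := .call true 0 [.call true 0 [.call false 0 []]]) rfl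
    rw [show (aPow (2*(n+1))).map (PL.out (Q := Bool)) =
      psubst [psubst [psubst [] ((aPow (2*n)).map PL.out)]
          (.node (.out true) [.node (.pr 0) []])]
        (.node (.out true) [.node (.pr 0) []]) by
        rw [show 2*(n+1) = (2*n)+1+1 by ring]
        simp [psubst_mapOut_aPow]]
    exact MExpand.call rfl
      (MExpandList.cons
        (MExpand.call rfl
          (MExpandList.cons (MExpand.call rfl MExpandList.nil ih) MExpandList.nil)
          (Nq_e_ex n))
        MExpandList.nil)
      (Nq_e_ex n)

/-! ### Well-formed monadic trees -/

lemma wf_aPow (n : ℕ) : RTree.WF rkGam (aPow n) := by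
  induction n with
  | zero => exact RTree.WF.node (by simp [rkGam]) (by simp)
  | succ n ih =>
    exact RTree.WF.node (by simp [rkGam]) (by simpa using ih)

lemma wf_eq_aPow {s : RTree Bool} (h : RTree.WF rkGam s) : ∃ n, s = aPow n := by
  induction h with
  | @node a ts hlen _ ih =>
    cases a with
    | false =>
      simp [rkGam] at hlen
      exact ⟨0, by rw [hlen]; rfl⟩
    | true =>
      simp [rkGam] at hlen
      rw [List.length_eq_one_iff] at hlen
      obtain ⟨t, rfl⟩ := hlen
      obtain ⟨n, rfl⟩ := ih t (by simp)
      exact ⟨n+1, rfl⟩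

lemma mapOut_inj_aPow (m : ℕ) : ∀ t : RTree Bool,
    t.map (PL.out (Q := Bool)) = (aPow m).map (PL.out (Q := Bool)) → t = aPow m := by
  induction m with
  | zero =>
    rintro ⟨b, ts⟩ h
    rw [mapOut_aPow_zero] at h
    simp [RTree.map] at h
    obtain ⟨hb, hts⟩ := h
    subst hb
    cases ts with
    | nil => rfl
    | cons t ts => simp [RTree.mapList] at hts
  | succ m ih =>
    rintro ⟨b, ts⟩ h
    rw [mapOut_aPow_succ] at h
    simp [RTree.map] at h
    obtain ⟨hb, hts⟩ := h
    subst hb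
    cases ts with
    | nil => simp [RTree.mapList] at hts
    | cons t ts =>
      cases ts with
      | cons t' ts' => simp [RTree.mapList] at hts
      | nil =>
        simp [RTree.mapList] at hts
        rw [ih t hts]
        rfl

lemma replace_aPow (n : ℕ) :
    RTree.ReplaceAt ((aPow n).map some) (List.replicate n 0) xLeaf (aPowX n) := by
  induction n with
  | zero => exact RTree.ReplaceAt.here _ _
  | succ n ih =>
    rw [mapSome_aPow_succ, List.replicate_succ]
    have h := RTree.ReplaceAt.child (a := some true) (ts := [(aPow n).map some])
      (i := 0) (r := xLeaf) (ti' := aPowX n) rfl ih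
    simpa [aPowX] using h

lemma abs_MN (n : ℕ) :
    |((MoutX n).height : ℤ) - ((NoutX n).height : ℤ)| = n := by
  rw [height_MoutX, height_NoutX]
  push_cast
  rw [show ((n:ℤ)+1) - (2*n+1) = -n by ring, abs_neg, abs_of_nonneg (by positivity)]

end Aux

/-- `M'` and `N'` are equivalent — both translate `aⁿ(e)` into `a^{2n}(e)` — but
for every `n` the height-balance of `M'(aⁿ(x))` and `N'(aⁿ(x))` equals `n`; hence
equivalent monadic macro tree transducers need not have bounded height-balance. -/
theorem monadic_mtt_unbounded_height_balance :
    MTT.tau Mex' = MTT.tau Nex' ∧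
    (∀ n : ℕ, (aPow n, aPow (2 * n)) ∈ MTT.tau Mex' ∧
              (aPow n, aPow (2 * n)) ∈ MTT.tau Nex') ∧
    (∀ n : ℕ, ∀ ξ1 ξ2, MEval Mex' Mex'.init (aPowX n) ξ1 →
        MEval Nex' Nex'.init (aPowX n) ξ2 →
        |(ξ1.height : ℤ) - (ξ2.height : ℤ)| = n) ∧
    ¬ ∃ c : ℕ, ∀ s u pt, (∃ t, (s, t) ∈ MTT.tau Mex') →
      RTree.ReplaceAt (RTree.map some s) u xLeaf pt →
      ∀ ξ1 ξ2, MEval Mex' Mex'.init pt ξ1 → MEval Nex' Nex'.init pt ξ2 →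
        |(ξ1.height : ℤ) - (ξ2.height : ℤ)| ≤ c := by
  refine ⟨?_, ?_, ?_, ?_⟩
  · ext ⟨s, t⟩
    constructor
    · rintro ⟨hwf, hev⟩
      obtain ⟨n, rfl⟩ := wf_eq_aPow hwf
      have ht := Mq0_e_uniq n _ hev
      have := mapOut_inj_aPow (2*n) t ht
      subst this
      exact ⟨hwf, Nq0_e_ex n⟩
    · rintro ⟨hwf, hev⟩
      obtain ⟨n, rfl⟩ := wf_eq_aPow hwf
      have ht := Nq0_e_uniq n _ hev
      have := mapOut_inj_aPow (2*n) t ht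
      subst this
      exact ⟨hwf, Mq0_e_ex n⟩
  · intro n
    exact ⟨⟨wf_aPow n, Mq0_e_ex n⟩, ⟨wf_aPow n, Nq0_e_ex n⟩⟩
  · intro n ξ1 ξ2 h1 h2
    rw [Mq0X_uniq n _ h1, Nq0X_uniq n _ h2]
    exact abs_MN n
  · rintro ⟨c, hc⟩
    have h := hc (aPow (c+1)) (List.replicate (c+1) 0) (aPowX (c+1))
      ⟨aPow (2*(c+1)), wf_aPow (c+1), Mq0_e_ex (c+1)⟩
      (replace_aPow (c+1)) (MoutX (c+1)) (NoutX (c+1))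
      (Mq0X_ex (c+1)) (Nq0X_ex (c+1))
    rw [abs_MN (c+1)] at h
    exact absurd h (by push_cast; omega)
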